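/- (Union Lemma for chain models.) Suppose for each m < ω we have a chain model (A^m_n)_{n<ω} with (A^m_n)_n ⊆ (A^{m+1}_n)_n for all m (meaning ⋃_n A^m_n ⊆ ⋃_n A^{m+1}_n and every A^m_n is contained in some A^{m+1}_k), and that each inclusion is L^c_{κ,κ}-elementary: for every bounded tuple ā in (A^m_n)_n and every formula φ, (A^m_n)_n ⊨^c φ(ā) iff (A^{m+1}_n)_n ⊨^c φ(ā). Define the union chain model by A^ω_n = ⋃_{m ≤ n} A^m_n. Then for every m, the chain model (A^m_n)_n is an L^c_{κ,κ}-elementary submodel of (A^ω_n)_n. -/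
import Mathlib


open Cardinal Set

inductive IFormula (τ : Type) (ar : τ → Type) : Type → Type 1 where
  | rel {α : Type} (R : τ) (t : ar R → α) : IFormula τ ar α
  | not {α : Type} (φ : IFormula τ ar α) : IFormula τ ar α
  | iAll {α : Type} (ι : Type) (f : ι → IFormula τ ar α) : IFormula τ ar α
  | iEx {α : Type} (ι : Type) (f : ι → IFormula τ ar α) : IFormula τ ar α
  | ex {α : Type} (β : Type) (φ : IFormula τ ar (α ⊕ β)) : IFormula τ ar α
  | all {α : Type} (β : Type) (φ : IFormula τ ar (α ⊕ β)) : IFormula τ ar α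

variable {τ : Type} {ar : τ → Type}

def ChainRealize {M : Type} (i : ∀ R, (ar R → M) → Prop) (c : ℕ → Set M) :
    ∀ {α : Type}, IFormula τ ar α → (α → M) → Prop
  | _, .rel R t, v => i R (fun j => v (t j))
  | _, .not φ, v => ¬ ChainRealize i c φ v
  | _, .iAll _ f, v => ∀ j, ChainRealize i c (f j) v
  | _, .iEx _ f, v => ∃ j, ChainRealize i c (f j) v
  | _, .ex _ φ, v => ∃ (n : ℕ) (b : _ → M), (∀ j, b j ∈ c n) ∧ ChainRealize i c φ (Sum.elim v b)
  | _, .all _ φ, v => ∀ (n : ℕ) (b : _ → M), (∀ j, b j ∈ c n) → ChainRealize i c φ (Sum.elim v b)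

def SmallForm (lam th : Cardinal.{0}) : ∀ {α : Type}, IFormula τ ar α → Prop
  | _, .rel _ _ => True
  | _, .not φ => SmallForm lam th φ
  | _, .iAll ι f => #ι < lam ∧ ∀ j, SmallForm lam th (f j)
  | _, .iEx ι f => #ι < lam ∧ ∀ j, SmallForm lam th (f j)
  | _, .ex β φ => #β < th ∧ SmallForm lam th φ
  | _, .all β φ => #β < th ∧ SmallForm lam th φ

/-- The Union Lemma for chain models: if `(A m)` is an `⊆`-increasing sequence of chain
models (over a common relational ambient structure) each of which is an `L^c_{κ,κ}`-elementary
submodel of the next, then each `(A m)` is an `L^c_{κ,κ}`-elementary submodel of the union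
chain model `A^ω` given by `A^ω n = ⋃_{m ≤ n} A m n`. -/
theorem chain_union_lemma
    (κ : Cardinal.{0})
    (U : Type) (i : ∀ R, (ar R → U) → Prop)
    (A : ℕ → ℕ → Set U)
    (hmono : ∀ m, Monotone (A m))
    (hsub : ∀ m n, ∃ k, A m n ⊆ A (m + 1) k)
    (helem : ∀ (m : ℕ) {α : Type} (φ : IFormula τ ar α) (v : α → U),
      SmallForm κ κ φ → (∃ n, ∀ j, v j ∈ A m n) →
      (ChainRealize i (A m) φ v ↔ ChainRealize i (A (m + 1)) φ v)) :
    ∀ (m : ℕ) {α : Type} (φ : IFormula τ ar α) (v : α → U),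
      SmallForm κ κ φ → (∃ n, ∀ j, v j ∈ A m n) →
      (ChainRealize i (A m) φ v ↔
        ChainRealize i (fun n => ⋃ m' ∈ Finset.range (n + 1), A m' n) φ v) := by
  set Aω : ℕ → Set U := fun n => ⋃ m' ∈ Finset.range (n + 1), A m' n with hAω
  have mono_up : ∀ m m' n, m ≤ m' → ∃ k, A m n ⊆ A m' k := by
    intro m m' n h
    induction h with
    | refl => exact ⟨n, subset_rfl⟩
    | @step m'' h ih =>
      obtain ⟨k, hk⟩ := ih
      obtain ⟨k2, hk2⟩ := hsub m'' k
      exact ⟨k2, hk.trans hk2⟩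
  have elem_up : ∀ m m', m ≤ m' → ∀ {α : Type} (φ : IFormula τ ar α) (v : α → U),
      SmallForm κ κ φ → (∃ n, ∀ j, v j ∈ A m n) →
      (ChainRealize i (A m) φ v ↔ ChainRealize i (A m') φ v) := by
    intro m m' h
    induction h with
    | refl => intro _ φ v _ _; exact Iff.rfl
    | @step m'' h ih =>
      intro α φ v hs hb
      refine (ih φ v hs hb).trans (helem m'' φ v hs ?_)
      obtain ⟨n, hn⟩ := hb
      obtain ⟨k, hk⟩ := mono_up m m'' n h
      exact ⟨k, fun j => hk (hn j)⟩
  have union_bound : ∀ N, ∃ K, Aω N ⊆ A N K := by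
    intro N
    have h1 : ∀ m', ∃ k, m' ≤ N → A m' N ⊆ A N k := by
      intro m'
      by_cases h : m' ≤ N
      · obtain ⟨k, hk⟩ := mono_up m' N N h
        exact ⟨k, fun _ => hk⟩
      · exact ⟨0, fun h' => absurd h' h⟩
    choose k hk using h1
    refine ⟨(Finset.range (N + 1)).sup k, ?_⟩
    intro x hx
    simp only [hAω, Set.mem_iUnion] at hx
    obtain ⟨m', hm', hxm⟩ := hx
    have hm'N : m' ≤ N := Nat.lt_succ_iff.mp (Finset.mem_range.mp hm')
    exact hmono N (Finset.le_sup hm') (hk m' hm'N hxm)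
  have into_union : ∀ m n, ∃ N, A m n ⊆ Aω N := by
    intro m n
    refine ⟨max m n, ?_⟩
    intro x hx
    simp only [hAω, Set.mem_iUnion]
    exact ⟨m, Finset.mem_range.mpr (Nat.lt_succ_of_le (le_max_left m n)),
      hmono m (le_max_right m n) hx⟩
  have key : ∀ {α : Type} (φ : IFormula τ ar α), SmallForm κ κ φ →
      ∀ (m : ℕ) (v : α → U), (∃ n, ∀ j, v j ∈ A m n) →
      (ChainRealize i (A m) φ v ↔ ChainRealize i Aω φ v) := by
    intro α φ
    induction φ with
    | rel R t => intro _ m v _; exact Iff.rfl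
    | not φ ih =>
      intro hs m v hb
      exact not_congr (ih hs m v hb)
    | iAll ι f ihf =>
      intro hs m v hb
      exact forall_congr' fun j => ihf j (hs.2 j) m v hb
    | iEx ι f ihf =>
      intro hs m v hb
      exact exists_congr fun j => ihf j (hs.2 j) m v hb
    | ex β φ ih =>
      intro hs m v hb
      obtain ⟨n0, hv⟩ := hb
      constructor
      · rintro ⟨n, b, hbnd, hr⟩
        obtain ⟨N, hN⟩ := into_union m n
        refine ⟨N, b, fun j => hN (hbnd j), ?_⟩
        refine (ih hs.2 m (Sum.elim v b) ⟨max n0 n, ?_⟩).mp hr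
        rintro (j | j)
        · exact hmono m (le_max_left n0 n) (hv j)
        · exact hmono m (le_max_right n0 n) (hbnd j)
      · rintro ⟨N, b, hbnd, hr⟩
        obtain ⟨K, hK⟩ := union_bound N
        set M := max m N with hM
        obtain ⟨K2, hK2⟩ := mono_up N M K (le_max_right m N)
        obtain ⟨k3, hk3⟩ := mono_up m M n0 (le_max_left m N)
        have hbM : ∀ j : β, b j ∈ A M (max K2 k3) :=
          fun j => hmono M (le_max_left K2 k3) (hK2 (hK (hbnd j)))
        have hvM : ∀ j, v j ∈ A M (max K2 k3) :=
          fun j => hmono M (le_max_right K2 k3) (hk3 (hv j))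
        have hbound : ∃ n, ∀ j, Sum.elim v b j ∈ A M n := by
          refine ⟨max K2 k3, ?_⟩
          rintro (j | j)
          · exact hvM j
          · exact hbM j
        have hrM : ChainRealize i (A M) φ (Sum.elim v b) :=
          (ih hs.2 M (Sum.elim v b) hbound).mpr hr
        have hexM : ChainRealize i (A M) (.ex β φ) v :=
          ⟨max K2 k3, b, hbM, hrM⟩
        exact (elem_up m M (le_max_left m N) (.ex β φ) v hs ⟨n0, hv⟩).mpr hexM
    | all β φ ih =>
      intro hs m v hb
      obtain ⟨n0, hv⟩ := hb
      constructor
      · intro hall N b hbnd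
        obtain ⟨K, hK⟩ := union_bound N
        set M := max m N with hM
        obtain ⟨K2, hK2⟩ := mono_up N M K (le_max_right m N)
        obtain ⟨k3, hk3⟩ := mono_up m M n0 (le_max_left m N)
        have hbM : ∀ j : β, b j ∈ A M (max K2 k3) :=
          fun j => hmono M (le_max_left K2 k3) (hK2 (hK (hbnd j)))
        have hvM : ∀ j, v j ∈ A M (max K2 k3) :=
          fun j => hmono M (le_max_right K2 k3) (hk3 (hv j))
        have hallM : ChainRealize i (A M) (.all β φ) v :=
          (elem_up m M (le_max_left m N) (.all β φ) v hs ⟨n0, hv⟩).mp hall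
        have hrM : ChainRealize i (A M) φ (Sum.elim v b) := hallM (max K2 k3) b hbM
        have hbound : ∃ n, ∀ j, Sum.elim v b j ∈ A M n := by
          refine ⟨max K2 k3, ?_⟩
          rintro (j | j)
          · exact hvM j
          · exact hbM j
        exact (ih hs.2 M (Sum.elim v b) hbound).mp hrM
      · intro hall n b hbnd
        obtain ⟨N, hN⟩ := into_union m n
        have hr : ChainRealize i Aω φ (Sum.elim v b) := hall N b fun j => hN (hbnd j)
        have hbound : ∃ n', ∀ j, Sum.elim v b j ∈ A m n' := by
          refine ⟨max n0 n, ?_⟩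
          rintro (j | j)
          · exact hmono m (le_max_left n0 n) (hv j)
          · exact hmono m (le_max_right n0 n) (hbnd j)
        exact (ih hs.2 m (Sum.elim v b) hbound).mpr hr
  intro m α φ v hs hb
  exact key φ hs m v hb
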